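/- Substitution lemma: if π₁ = Δ, x:τ ⊢ M : α and π₂ = Γ ⊢ V : τ are derivable (V a value), then there is a derivation π₃ = Δ⊗Γ ⊢ M[V/x] : α with |π₃| = |π₁| + |π₂|. -/

import Mathlib

-- Computational and parallel types
mutual
  inductive CTy : Type
    | one : CTy
    | tens : CTy → CTy → CTy
    | arr : CTy → PTy → CTy
  inductive PTy : Type
    | ofC : CTy → PTy
    | par : PTy → PTy → PTy
end

-- Type equivalence: AC of ⊗ and ⅋, 1 neutral for ⊗
mutual
  inductive CEq : CTy → CTy → Prop
    | refl (τ) : CEq τ τ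
    | symm : CEq τ ρ → CEq ρ τ
    | trans : CEq τ ρ → CEq ρ σ → CEq τ σ
    | comm (τ ρ) : CEq (.tens τ ρ) (.tens ρ τ)
    | assoc (τ ρ σ) : CEq (.tens (.tens τ ρ) σ) (.tens τ (.tens ρ σ))
    | unit (τ) : CEq (.tens τ .one) τ
    | tensCongr : CEq τ τ' → CEq ρ ρ' → CEq (.tens τ ρ) (.tens τ' ρ')
    | arrCongr : CEq τ τ' → PEq α α' → CEq (.arr τ α) (.arr τ' α')
  inductive PEq : PTy → PTy → Prop
    | refl (α) : PEq α α
    | symm : PEq α β → PEq β α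
    | trans : PEq α β → PEq β γ → PEq α γ
    | comm (α β) : PEq (.par α β) (.par β α)
    | assoc (α β γ) : PEq (.par (.par α β) γ) (.par α (.par β γ))
    | parCongr : PEq α α' → PEq β β' → PEq (.par α β) (.par α' β')
    | ofC : CEq τ τ' → PEq (.ofC τ) (.ofC τ')
end

def Ctx : Type := ℕ → CTy
def Ctx.empty : Ctx := fun _ => CTy.one
def Ctx.tens (Γ Δ : Ctx) : Ctx := fun n => CTy.tens (Γ n) (Δ n)
def Ctx.single (x : ℕ) (τ : CTy) : Ctx := fun n => if n = x then τ else CTy.one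
def Ctx.cons (τ : CTy) (Γ : Ctx) : Ctx := fun n =>
  match n with
  | 0 => τ
  | n+1 => Γ n
def CtxEq (Γ Δ : Ctx) : Prop := ∀ n, CEq (Γ n) (Δ n)

def tensList (l : List CTy) : CTy := l.foldr CTy.tens CTy.one
def tensFin (n : ℕ) (f : Fin n → CTy) : CTy := tensList (List.ofFn f)
def tensCtxFin (n : ℕ) (Δ : Fin n → Ctx) : Ctx := fun x => tensFin n (fun i => Δ i x)

def parList : List PTy → PTy
  | [] => PTy.ofC CTy.one
  | [α] => α
  | α :: β :: rest => PTy.par α (parList (β :: rest))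

def parFin (n : ℕ) (f : Fin n → PTy) : PTy := parList (List.ofFn f)

/-- ⅋ᵏ1 : the par of k copies of 1 (left associated); junk value at 0. -/
def parOnes : ℕ → PTy
  | 0 => PTy.ofC CTy.one
  | 1 => PTy.ofC CTy.one
  | n+2 => PTy.par (parOnes (n+1)) (PTy.ofC CTy.one)

/-- Terms of Λ₊∥ in de Bruijn notation. -/
inductive Tm : Type
  | var : ℕ → Tm
  | lam : Tm → Tm
  | app : Tm → Tm → Tm
  | plus : Tm → Tm → Tm
  | par : Tm → Tm → Tm

def IsValue : Tm → Prop
  | .var _ => True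
  | .lam _ => True
  | _ => False

def IsPar : Tm → Prop
  | .par _ _ => True
  | _ => False

def shiftTm (c : ℕ) : Tm → Tm
  | .var n => if n < c then .var n else .var (n+1)
  | .lam M => .lam (shiftTm (c+1) M)
  | .app M N => .app (shiftTm c M) (shiftTm c N)
  | .plus M N => .plus (shiftTm c M) (shiftTm c N)
  | .par M N => .par (shiftTm c M) (shiftTm c N)

/-- Capture-avoiding substitution `M[V/k]` (de Bruijn). -/
def substTm : Tm → ℕ → Tm → Tm
  | .var n, k, V => if n = k then V else if k < n then .var (n-1) else .var n
  | .lam M, k, V => .lam (substTm M (k+1) (shiftTm 0 V))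
  | .app M N, k, V => .app (substTm M k V) (substTm N k V)
  | .plus M N, k, V => .plus (substTm M k V) (substTm N k V)
  | .par M N, k, V => .par (substTm M k V) (substTm N k V)

def closedUnder : ℕ → Tm → Prop
  | d, .var n => n < d
  | d, .lam M => closedUnder (d+1) M
  | d, .app M N => closedUnder d M ∧ closedUnder d N
  | d, .plus M N => closedUnder d M ∧ closedUnder d N
  | d, .par M N => closedUnder d M ∧ closedUnder d N

def Closed (M : Tm) : Prop := closedUnder 0 M

/-- One-step reduction; the boolean flag records whether a +-reduction is used. -/
inductive Step : Bool → Tm → Tm → Prop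
  | beta {M V} : IsValue V → Step false (.app (.lam M) V) (substTm M 0 V)
  | plusL (M N) : Step true (.plus M N) M
  | plusR (M N) : Step true (.plus M N) N
  | parAppL (M N P) : Step false (.app (.par M N) P) (.par (.app M P) (.app N P))
  | parAppR {V} (M N) : IsValue V → Step false (.app V (.par M N)) (.par (.app V M) (.app V N))
  | parL {b M M'} (N) : Step b M M' → Step b (.par M N) (.par M' N)
  | parR {b N N'} (M) : Step b N N' → Step b (.par M N) (.par M N')
  | appL {b M M'} (N) : Step b M M' → ¬ IsPar M → Step b (.app M N) (.app M' N)
  | appR {b M M' V} : IsValue V → Step b M M' → ¬ IsPar M → Step b (.app V M) (.app V M')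

/-- The two contracta of a single +-redex, reduced in context. -/
inductive PlusPair : Tm → Tm → Tm → Prop
  | base (M N) : PlusPair (.plus M N) M N
  | parL {M M₁ M₂} (N) : PlusPair M M₁ M₂ → PlusPair (.par M N) (.par M₁ N) (.par M₂ N)
  | parR {N N₁ N₂} (M) : PlusPair N N₁ N₂ → PlusPair (.par M N) (.par M N₁) (.par M N₂)
  | appL {M M₁ M₂} (N) : PlusPair M M₁ M₂ → ¬ IsPar M → PlusPair (.app M N) (.app M₁ N) (.app M₂ N)
  | appR {M M₁ M₂ V} : IsValue V → PlusPair M M₁ M₂ → ¬ IsPar M → PlusPair (.app V M) (.app V M₁) (.app V M₂)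

/-- n-step reduction. -/
inductive Steps : ℕ → Tm → Tm → Prop
  | refl (M) : Steps 0 M M
  | head {b M N P n} : Step b M N → Steps n N P → Steps (n+1) M P

/-- A closed term converges iff it reduces to a parallel composition of values. -/
def Converges (M : Tm) : Prop :=
  ∃ (n : ℕ) (V : Tm) (Vs : List Tm), IsValue V ∧ (∀ W ∈ Vs, IsValue W) ∧
    Steps n M (Vs.foldl Tm.par V)

/-- Typing derivations, indexed by the measure |π|. -/
inductive Deriv : Ctx → Tm → PTy → ℕ → Prop
  | ax (x : ℕ) (τ : CTy) : Deriv (Ctx.single x τ) (.var x) (.ofC τ) 0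
  | lamI (n : ℕ) (Δ : Fin n → Ctx) (τ : Fin n → CTy) (α : Fin n → PTy) (ms : Fin n → ℕ)
      (M : Tm) :
      (∀ i, Deriv (Ctx.cons (τ i) (Δ i)) M (α i) (ms i)) →
      Deriv (tensCtxFin n Δ) (.lam M)
        (.ofC (tensFin n (fun i => .arr (τ i) (α i)))) (∑ i, ms i)
  | appE (k : ℕ) (hk : 0 < k) (nf : Fin k → ℕ) (hn : ∀ i, 0 < nf i)
      (τ : ∀ i : Fin k, Fin (nf i) → CTy) (α : ∀ i : Fin k, Fin (nf i) → PTy)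
      (Δ : Ctx) (Γ : Fin k → Ctx) (m0 : ℕ) (ms : Fin k → ℕ) (M N : Tm) :
      Deriv Δ M (parFin k (fun i => .ofC (tensFin (nf i) (fun j => .arr (τ i j) (α i j))))) m0 →
      (∀ i, Deriv (Γ i) N (parFin (nf i) (fun j => .ofC (τ i j))) (ms i)) →
      Deriv (Ctx.tens Δ (tensCtxFin k Γ)) (.app M N)
        (parFin k (fun i => parFin (nf i) (α i)))
        ((m0 + (∑ i, ms i) + (∑ i, 2 * nf i)) - 1)
  | plusL {Δ M α m} (N) : Deriv Δ M α m → Deriv Δ (.plus M N) α (m+1)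
  | plusR {Δ N α m} (M) : Deriv Δ N α m → Deriv Δ (.plus M N) α (m+1)
  | parI {Δ Γ M N α β m m'} : Deriv Δ M α m → Deriv Γ N β m' →
      Deriv (Ctx.tens Δ Γ) (.par M N) (.par α β) (m + m')
  | eqv {Γ Γ' M α α' m} : Deriv Γ M α m → CtxEq Γ Γ' → PEq α α' → Deriv Γ' M α' m

def deltaTm : Tm := .lam (.app (.var 0) (.var 0))
def OmegaTm : Tm := .app deltaTm deltaTm
def Idt : Tm := .lam (.var 0)
def dstarTm : Tm := .lam (.lam (.app (.var 1) (.var 1)))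
def YstarTm : Tm := .app dstarTm dstarTm

/-! ### Part 1: counting functions -/

def cac : CTy → ℕ
  | .one => 0
  | .tens a b => cac a + cac b
  | .arr _ _ => 1

def pac : PTy → ℕ
  | .ofC τ => cac τ
  | .par a b => pac a + pac b

def pa : PTy → ℕ
  | .ofC _ => 1
  | .par a b => pa a + pa b

theorem ceq_cac {τ ρ : CTy} (h : CEq τ ρ) : cac τ = cac ρ := by
  refine CEq.rec (motive_1 := fun τ ρ _ => cac τ = cac ρ)
    (motive_2 := fun α β _ => pac α = pac β)
    ?_ ?_ ?_ ?_ ?_ ?_ ?_ ?_ ?_ ?_ ?_ ?_ ?_ ?_ ?_ h <;> intros <;> simp_all [cac, pac] <;> try omega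

theorem peq_pac {α β : PTy} (h : PEq α β) : pac α = pac β := by
  refine PEq.rec (motive_1 := fun τ ρ _ => cac τ = cac ρ)
    (motive_2 := fun α β _ => pac α = pac β)
    ?_ ?_ ?_ ?_ ?_ ?_ ?_ ?_ ?_ ?_ ?_ ?_ ?_ ?_ ?_ h <;> intros <;> simp_all [cac, pac] <;> try omega

theorem peq_pa {α β : PTy} (h : PEq α β) : pa α = pa β := by
  refine PEq.rec (motive_1 := fun _ _ _ => True)
    (motive_2 := fun α β _ => pa α = pa β)
    ?_ ?_ ?_ ?_ ?_ ?_ ?_ ?_ ?_ ?_ ?_ ?_ ?_ ?_ ?_ h <;> intros <;> simp_all [pa] <;> try omega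

theorem pa_pos : ∀ α, 1 ≤ pa α
  | .ofC _ => le_refl _
  | .par a b => le_trans (pa_pos a) (by simp [pa])

theorem pa_eq_one {α : PTy} (h : pa α = 1) : ∃ τ, α = .ofC τ := by
  cases α with
  | ofC τ => exact ⟨τ, rfl⟩
  | par a b => exfalso; have := pa_pos a; have := pa_pos b; simp [pa] at h; omega

theorem peq_ofC_inv {α β : PTy} (h : PEq α β) :
    ∀ {a b : CTy}, α = .ofC a → β = .ofC b → CEq a b := by
  refine PEq.rec (motive_1 := fun _ _ _ => True)
    (motive_2 := fun α β _ => ∀ {a b : CTy}, α = .ofC a → β = .ofC b → CEq a b)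
    ?_ ?_ ?_ ?_ ?_ ?_ ?_ ?_ ?_ ?_ ?_ ?_ ?_ ?_ ?_ h
  · intros; trivial
  · intros; trivial
  · intros; trivial
  · intros; trivial
  · intros; trivial
  · intros; trivial
  · intros; trivial
  · intros; trivial
  · intro α a b e1 e2; subst e1; cases e2; exact .refl _
  · intro α β hp ih a b e1 e2; exact .symm (ih e2 e1)
  · intro α β γ h1 h2 ih1 ih2 a b e1 e2
    have hmid : pa β = 1 := by rw [← peq_pa h1, e1]; rfl
    obtain ⟨c, hc⟩ := pa_eq_one hmid
    exact .trans (ih1 e1 hc) (ih2 hc e2)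
  · intro α β a b e1 e2; cases e1
  · intro α β γ a b e1 e2; cases e1
  · intro α α' β β' h1 h2 ih1 ih2 a b e1 e2; cases e1
  · intro τ τ' hc _ a b e1 e2; cases e1; cases e2; exact hc

theorem caEqOne : ∀ {τ : CTy}, cac τ = 0 → CEq τ .one
  | .one, _ => .refl _
  | .tens a b, h => by
      simp [cac] at h
      exact .trans (.tensCongr (caEqOne h.1) (caEqOne h.2)) (.unit _)
  | .arr _ _, h => by simp [cac] at h

/-- `tens one γ ≃ γ` -/
theorem ceq_one_tens (γ : CTy) : CEq (.tens .one γ) γ := .trans (.comm _ _) (.unit _)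
/-! ### Part 2: tensList toolkit -/

theorem ceq_tensList_append : ∀ (l₁ l₂ : List CTy),
    CEq (tensList (l₁ ++ l₂)) (.tens (tensList l₁) (tensList l₂))
  | [], l₂ => .symm (ceq_one_tens _)
  | a :: l, l₂ => by
      show CEq (.tens a (tensList (l ++ l₂))) _
      exact .trans (.tensCongr (.refl a) (ceq_tensList_append l l₂)) (.symm (.assoc _ _ _))

theorem ceq_tensList_perm {l₁ l₂ : List CTy} (h : l₁.Perm l₂) :
    CEq (tensList l₁) (tensList l₂) := by
  induction h with
  | nil => exact .refl _
  | cons x _ ih => exact .tensCongr (.refl x) ih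
  | swap x y l =>
      show CEq (.tens y (.tens x (tensList l))) (.tens x (.tens y (tensList l)))
      exact .trans (.symm (.assoc _ _ _)) (.trans (.tensCongr (.comm _ _) (.refl _)) (.assoc _ _ _))
  | trans _ _ ih1 ih2 => exact .trans ih1 ih2

theorem ceq_tensList_forall₂ {l₁ l₂ : List CTy} (h : List.Forall₂ CEq l₁ l₂) :
    CEq (tensList l₁) (tensList l₂) := by
  induction h with
  | nil => exact .refl _
  | cons h _ ih => exact .tensCongr h ih

theorem forall₂_ceq_symm {a b : List CTy} (h : List.Forall₂ CEq a b) :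
    List.Forall₂ CEq b a := by
  induction h with
  | nil => exact .nil
  | cons h _ ih => exact .cons (.symm h) ih

theorem forall₂_ceq_trans : ∀ {a b c : List CTy},
    List.Forall₂ CEq a b → List.Forall₂ CEq b c → List.Forall₂ CEq a c := by
  intro a b c h1 h2
  induction h1 generalizing c with
  | nil => cases h2; exact .nil
  | cons h _ ih => cases h2 with | cons h' t' => exact .cons (.trans h h') (ih t')

theorem forall₂_ceq_append {a b c d : List CTy} (h1 : List.Forall₂ CEq a b)
    (h2 : List.Forall₂ CEq c d) : List.Forall₂ CEq (a ++ c) (b ++ d) := by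
  induction h1 with
  | nil => exact h2
  | cons h _ ih => exact .cons h ih

def arrs : CTy → List CTy
  | .one => []
  | .tens a b => arrs a ++ arrs b
  | .arr a b => [.arr a b]

theorem ceq_arrs : ∀ (τ : CTy), CEq τ (tensList (arrs τ))
  | .one => .refl _
  | .tens a b =>
      .trans (.tensCongr (ceq_arrs a) (ceq_arrs b)) (.symm (ceq_tensList_append _ _))
  | .arr a b => .symm (.unit _)

/-- Permutation-up-to-CEq of lists. -/
def LEq (l₁ l₂ : List CTy) : Prop := ∃ l', l₁.Perm l' ∧ List.Forall₂ CEq l' l₂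

theorem LEq.refl (l : List CTy) : LEq l l :=
  ⟨l, .refl l, List.forall₂_same.2 fun _ _ => .refl _⟩

/-- transport a permutation on the right of a Forall₂ to the left. -/
theorem forall₂_perm_right : ∀ {y y' : List CTy}, y.Perm y' → ∀ {x : List CTy},
    List.Forall₂ CEq x y → ∃ x', x.Perm x' ∧ List.Forall₂ CEq x' y' := by
  intro y y' p
  induction p with
  | nil => intro x h; cases h; exact ⟨[], .refl _, .nil⟩
  | cons a p ih =>
      intro x h
      cases h with
      | cons hb ht =>
        obtain ⟨x', px, fx⟩ := ih ht
        exact ⟨_ :: x', px.cons _, .cons hb fx⟩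
  | swap a b t =>
      intro x h
      cases h with
      | cons hc ht =>
        cases ht with
        | cons hd htt => exact ⟨_ :: _ :: _, .swap _ _ _, .cons hd (.cons hc htt)⟩
  | trans p1 p2 ih1 ih2 =>
      intro x h
      obtain ⟨x', px, fx⟩ := ih1 h
      obtain ⟨x'', px', fx'⟩ := ih2 fx
      exact ⟨x'', px.trans px', fx'⟩

theorem LEq.symm {l₁ l₂ : List CTy} (h : LEq l₁ l₂) : LEq l₂ l₁ := by
  obtain ⟨l', p, f⟩ := h
  obtain ⟨x', px, fx⟩ := forall₂_perm_right p.symm (forall₂_ceq_symm f)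
  exact ⟨x', px, fx⟩

theorem LEq.trans {l₁ l₂ l₃ : List CTy} (h1 : LEq l₁ l₂) (h2 : LEq l₂ l₃) : LEq l₁ l₃ := by
  obtain ⟨a, pa, fa⟩ := h1
  obtain ⟨b, pb, fb⟩ := h2
  obtain ⟨a', pa', fa'⟩ := forall₂_perm_right pb fa
  exact ⟨a', pa.trans pa', forall₂_ceq_trans fa' fb⟩

theorem LEq.append {a b c d : List CTy} (h1 : LEq a b) (h2 : LEq c d) : LEq (a ++ c) (b ++ d) := by
  obtain ⟨a', pa, fa⟩ := h1
  obtain ⟨c', pc, fc⟩ := h2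
  exact ⟨a' ++ c', pa.append pc, forall₂_ceq_append fa fc⟩

/-- CEq implies LEq of the arrow lists. -/
theorem ceq_arrs_leq {τ ρ : CTy} (h : CEq τ ρ) : LEq (arrs τ) (arrs ρ) := by
  refine CEq.rec (motive_1 := fun τ ρ _ => LEq (arrs τ) (arrs ρ))
    (motive_2 := fun _ _ _ => True)
    ?_ ?_ ?_ ?_ ?_ ?_ ?_ ?_ ?_ ?_ ?_ ?_ ?_ ?_ ?_ h
  · exact fun τ => LEq.refl _
  · exact fun _ ih => ih.symm
  · exact fun _ _ ih1 ih2 => ih1.trans ih2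
  · intro τ ρ
    exact ⟨arrs ρ ++ arrs τ, List.perm_append_comm, List.forall₂_same.2 fun _ _ => .refl _⟩
  · intro τ ρ σ
    show LEq ((arrs τ ++ arrs ρ) ++ arrs σ) (arrs τ ++ (arrs ρ ++ arrs σ))
    rw [List.append_assoc]; exact LEq.refl _
  · intro τ
    show LEq (arrs τ ++ []) (arrs τ)
    rw [List.append_nil]; exact LEq.refl _
  · exact fun _ _ ih1 ih2 => ih1.append ih2
  · intro τ τ' α α' h1 h2 _ _
    exact ⟨[.arr τ α], .refl _, .cons (.arrCongr h1 h2) .nil⟩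
  all_goals intros; trivial
/-! ### Part 3: tensFin lemmas -/

theorem tensFin_zero (f : Fin 0 → CTy) : tensFin 0 f = .one := rfl

theorem tensFin_succ {n : ℕ} (f : Fin (n+1) → CTy) :
    tensFin (n+1) f = .tens (f 0) (tensFin n (fun i => f i.succ)) := by
  unfold tensFin
  rw [List.ofFn_succ]
  rfl

theorem ceq_tensFin_congr : ∀ {n : ℕ} {f g : Fin n → CTy},
    (∀ i, CEq (f i) (g i)) → CEq (tensFin n f) (tensFin n g) := by
  intro n
  induction n with
  | zero => intro f g _; exact .refl _
  | succ n ih =>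
      intro f g h
      rw [tensFin_succ, tensFin_succ]
      exact .tensCongr (h 0) (ih fun i => h i.succ)

theorem ceq_middle4 (a b c d : CTy) :
    CEq (.tens (.tens a b) (.tens c d)) (.tens (.tens a c) (.tens b d)) := by
  refine .trans (.assoc _ _ _) (.trans (.tensCongr (.refl a) ?_) (.symm (.assoc _ _ _)))
  -- b ⊗ (c ⊗ d) ≃ c ⊗ (b ⊗ d)
  exact .trans (.symm (.assoc _ _ _)) (.trans (.tensCongr (.comm _ _) (.refl _)) (.assoc _ _ _))

theorem ceq_tensFin_unzip : ∀ {n : ℕ} (f g : Fin n → CTy),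
    CEq (tensFin n (fun i => .tens (f i) (g i))) (.tens (tensFin n f) (tensFin n g)) := by
  intro n
  induction n with
  | zero => intro f g; exact .symm (.unit _)
  | succ n ih =>
      intro f g
      rw [tensFin_succ, tensFin_succ, tensFin_succ]
      exact .trans (.tensCongr (.refl _) (ih _ _)) (ceq_middle4 _ _ _ _)

theorem cac_tensList : ∀ l : List CTy, cac (tensList l) = (l.map cac).sum
  | [] => rfl
  | a :: l => by
      show cac (.tens a (tensList l)) = _
      simp [cac, cac_tensList l]

theorem sum_ofFn_eq {n : ℕ} (f : Fin n → ℕ) : ((List.ofFn f).sum) = ∑ i, f i :=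
  List.sum_ofFn

theorem cac_tensFin {n : ℕ} (f : Fin n → CTy) : cac (tensFin n f) = ∑ i, cac (f i) := by
  show cac (tensList (List.ofFn f)) = _
  rw [cac_tensList, List.map_ofFn, sum_ofFn_eq]
  rfl
/-! ### Part 4: CtxEq helpers, inversions, valueZero -/

theorem CtxEq.refl (Γ : Ctx) : CtxEq Γ Γ := fun _ => .refl _
theorem CtxEq.symm {Γ Δ : Ctx} (h : CtxEq Γ Δ) : CtxEq Δ Γ := fun n => .symm (h n)
theorem CtxEq.trans {Γ Δ Θ : Ctx} (h1 : CtxEq Γ Δ) (h2 : CtxEq Δ Θ) : CtxEq Γ Θ :=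
  fun n => .trans (h1 n) (h2 n)

theorem var_inv {Γ : Ctx} {M : Tm} {α : PTy} {m : ℕ} (h : Deriv Γ M α m) :
    ∀ x, M = .var x → m = 0 ∧ ∃ τ, CtxEq Γ (Ctx.single x τ) ∧ PEq (.ofC τ) α := by
  induction h with
  | ax x τ => intro y hy; cases hy; exact ⟨rfl, τ, CtxEq.refl _, .refl _⟩
  | lamI => intro y hy; simp at hy
  | appE => intro y hy; simp at hy
  | plusL => intro y hy; simp at hy
  | plusR => intro y hy; simp at hy
  | parI => intro y hy; simp at hy
  | eqv h hc hp ih =>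
      intro y hy
      obtain ⟨hm, τ, hΓ, hα⟩ := ih y hy
      exact ⟨hm, τ, (hc.symm).trans hΓ, hα.trans hp⟩

theorem lam_inv {Γ : Ctx} {M : Tm} {α : PTy} {m : ℕ} (h : Deriv Γ M α m) :
    ∀ M₀, M = .lam M₀ → ∃ (n : ℕ) (Δ : Fin n → Ctx) (τ : Fin n → CTy) (β : Fin n → PTy)
      (ms : Fin n → ℕ),
      (∀ i, Deriv (Ctx.cons (τ i) (Δ i)) M₀ (β i) (ms i)) ∧
      CtxEq Γ (tensCtxFin n Δ) ∧
      PEq (.ofC (tensFin n fun i => .arr (τ i) (β i))) α ∧ m = ∑ i, ms i := by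
  induction h with
  | ax => intro y hy; simp at hy
  | lamI n Δ τ α ms M prem =>
      intro y hy; cases hy
      exact ⟨n, Δ, τ, α, ms, prem, CtxEq.refl _, .refl _, rfl⟩
  | appE => intro y hy; simp at hy
  | plusL => intro y hy; simp at hy
  | plusR => intro y hy; simp at hy
  | parI => intro y hy; simp at hy
  | eqv h hc hp ih =>
      intro y hy
      obtain ⟨n, Δ, τ, β, ms, prem, hΓ, hα, hm⟩ := ih y hy
      exact ⟨n, Δ, τ, β, ms, prem, (hc.symm).trans hΓ, hα.trans hp, hm⟩

theorem valueZero {Γ : Ctx} {V : Tm} {α : PTy} {m : ℕ} (hV : IsValue V)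
    (h : Deriv Γ V α m) (hα : pac α = 0) : m = 0 ∧ ∀ n, cac (Γ n) = 0 := by
  cases V with
  | var x =>
      obtain ⟨hm, τ, hΓ, hty⟩ := var_inv h x rfl
      have hτ : cac τ = 0 := by have := peq_pac hty; simp [pac] at this; omega
      refine ⟨hm, fun n => ?_⟩
      rw [ceq_cac (hΓ n)]
      by_cases hn : n = x <;> simp [Ctx.single, hn, cac, hτ]
  | lam M₀ =>
      obtain ⟨n, Δ, τ, β, ms, prem, hΓ, hty, hm⟩ := lam_inv h M₀ rfl
      have hT : cac (tensFin n fun i => .arr (τ i) (β i)) = 0 := by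
        have := peq_pac hty; simp [pac] at this; omega
      have hn0 : n = 0 := by
        rcases n with _ | n
        · rfl
        · exfalso
          rw [tensFin_succ] at hT
          simp [cac] at hT
      subst hn0
      refine ⟨by rw [hm]; simp, fun x => ?_⟩
      rw [ceq_cac (hΓ x)]
      show cac (tensFin 0 _) = 0
      rfl
  | app M N => simp [IsValue] at hV
  | plus M N => simp [IsValue] at hV
  | par M N => simp [IsValue] at hV
/-! ### Part 5a: list plumbing for the splitting lemma -/

theorem perm_map_inv {β : Type} {F : β → CTy} : ∀ {la l' : List CTy}, la.Perm l' →
    ∀ L : List β, la = L.map F → ∃ L', L.Perm L' ∧ l' = L'.map F := by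
  intro la l' p
  induction p with
  | nil =>
      intro L hL
      cases L with
      | nil => exact ⟨[], .refl _, rfl⟩
      | cons t Lt => simp at hL
  | cons x p ih =>
      intro L hL
      cases L with
      | nil => simp at hL
      | cons t Lt =>
          simp only [List.map] at hL
          injection hL with h1 h2
          obtain ⟨L', pL, hL'⟩ := ih Lt h2
          exact ⟨t :: L', pL.cons _, by simp [List.map, ← h1, hL']⟩
  | swap x y l =>
      intro L hL
      cases L with
      | nil => simp at hL
      | cons t0 L0 =>
        cases L0 with
        | nil => simp at hL
        | cons t1 Lt =>
            simp only [List.map] at hL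
            injection hL with h1 h2
            injection h2 with h2 h3
            exact ⟨t1 :: t0 :: Lt, .swap _ _ _, by simp [List.map, ← h1, ← h2, h3]⟩
  | trans p1 p2 ih1 ih2 =>
      intro L hL
      obtain ⟨L', pL, hL'⟩ := ih1 L hL
      obtain ⟨L'', pL', hL''⟩ := ih2 L' hL'
      exact ⟨L'', pL.trans pL', hL''⟩

theorem forall₂_append_split {R : CTy → CTy → Prop} : ∀ {a : List CTy} {l b : List CTy},
    List.Forall₂ R l (a ++ b) → ∃ l₁ l₂, l = l₁ ++ l₂ ∧ List.Forall₂ R l₁ a ∧ List.Forall₂ R l₂ b := by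
  intro a
  induction a with
  | nil => intro l b h; exact ⟨[], l, rfl, .nil, h⟩
  | cons x t ih =>
      intro l b h
      cases h with
      | cons hx ht =>
          obtain ⟨l₁, l₂, he, h1, h2⟩ := ih ht
          exact ⟨_ :: l₁, l₂, by simp [he], .cons hx h1, h2⟩

theorem map_append_split {β : Type} {F : β → CTy} : ∀ {l₁ : List CTy} {L : List β} {l₂ : List CTy},
    L.map F = l₁ ++ l₂ → ∃ L₁ L₂, L = L₁ ++ L₂ ∧ L₁.map F = l₁ ∧ L₂.map F = l₂ := by
  intro l₁
  induction l₁ with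
  | nil => intro L l₂ h; exact ⟨[], L, rfl, rfl, h⟩
  | cons x t ih =>
      intro L l₂ h
      cases L with
      | nil => simp at h
      | cons t0 Lt =>
          simp only [List.map] at h
          injection h with h1 h2
          obtain ⟨L₁, L₂, he, e1, e2⟩ := ih h2
          exact ⟨t0 :: L₁, L₂, by simp [he], by simp [List.map, h1, e1], e2⟩

theorem arrs_of_all_arr : ∀ l : List CTy, (∀ x ∈ l, ∃ a b, x = .arr a b) →
    arrs (tensList l) = l := by
  intro l
  induction l with
  | nil => intro _; rfl
  | cons x t ih =>
      intro h
      obtain ⟨a, b, hx⟩ := h x (by simp)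
      show arrs (.tens x (tensList t)) = x :: t
      have ht := ih fun y hy => h y (by simp [hy])
      subst hx
      simp [arrs, ht]

theorem tensFin_comp_get {β : Type} (f : β → CTy) (L : List β) :
    tensFin L.length (fun i => f (L.get i)) = tensList (L.map f) := by
  show tensList (List.ofFn _) = _
  rw [show (fun i => f (L.get i)) = f ∘ L.get from rfl, ← List.map_ofFn, List.ofFn_get]

theorem sum_comp_get (L : List (Ctx × CTy × PTy × ℕ)) :
    (∑ i, (L.get i).2.2.2) = (L.map (fun t => t.2.2.2)).sum := by
  rw [← sum_ofFn_eq]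
  congr 1
  rw [show (fun i => (L.get i).2.2.2) = (fun t : Ctx × CTy × PTy × ℕ => t.2.2.2) ∘ L.get from rfl,
    ← List.map_ofFn, List.ofFn_get]
/-! ### Part 5b: the splitting lemma -/

theorem side_build (M₀ : Tm) (σ : CTy) (L₁ : List (Ctx × CTy × PTy × ℕ))
    (hprem : ∀ t ∈ L₁, Deriv (Ctx.cons t.2.1 t.1) M₀ t.2.2.1 t.2.2.2)
    (f1 : List.Forall₂ CEq (L₁.map (fun t => CTy.arr t.2.1 t.2.2.1)) (arrs σ)) :
    Deriv (fun x => tensList (L₁.map (fun t => t.1 x))) (.lam M₀) (.ofC σ)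
      ((L₁.map (fun t => t.2.2.2)).sum) := by
  have base := Deriv.lamI L₁.length (fun i => (L₁.get i).1) (fun i => (L₁.get i).2.1)
    (fun i => (L₁.get i).2.2.1) (fun i => (L₁.get i).2.2.2) M₀
    (fun i => hprem _ (L₁.get_mem i))
  have hctx : tensCtxFin L₁.length (fun i => (L₁.get i).1)
      = fun x => tensList (L₁.map (fun t => t.1 x)) := by
    funext x
    exact tensFin_comp_get (fun t => t.1 x) L₁
  have hty : (tensFin L₁.length fun i => CTy.arr ((L₁.get i).2.1) ((L₁.get i).2.2.1))
      = tensList (L₁.map (fun t => CTy.arr t.2.1 t.2.2.1)) :=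
    tensFin_comp_get (fun t => CTy.arr t.2.1 t.2.2.1) L₁
  have hms : (∑ i, (L₁.get i).2.2.2) = (L₁.map (fun t => t.2.2.2)).sum := sum_comp_get L₁
  rw [hctx, hty, hms] at base
  exact base.eqv (CtxEq.refl _)
    (.ofC (.trans (ceq_tensList_forall₂ f1) (.symm (ceq_arrs σ))))

theorem deriv_split {Γ : Ctx} {V : Tm} {σ ρ : CTy} {m : ℕ} (hV : IsValue V)
    (h : Deriv Γ V (.ofC (.tens σ ρ)) m) :
    ∃ Γ₁ Γ₂ m₁ m₂, m = m₁ + m₂ ∧ Deriv Γ₁ V (.ofC σ) m₁ ∧ Deriv Γ₂ V (.ofC ρ) m₂ ∧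
      CtxEq Γ (Ctx.tens Γ₁ Γ₂) := by
  cases V with
  | app M N => simp [IsValue] at hV
  | plus M N => simp [IsValue] at hV
  | par M N => simp [IsValue] at hV
  | var x =>
      obtain ⟨hm, τ, hΓ, hty⟩ := var_inv h x rfl
      have hce : CEq τ (.tens σ ρ) := peq_ofC_inv hty rfl rfl
      refine ⟨Ctx.single x σ, Ctx.single x ρ, 0, 0, by omega, .ax _ _, .ax _ _, ?_⟩
      intro n
      refine .trans (hΓ n) ?_
      by_cases hn : n = x
      · subst hn
        simp only [Ctx.single, Ctx.tens, if_pos rfl]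
        exact hce
      · simp only [Ctx.single, Ctx.tens, if_neg hn]
        exact .symm (.unit _)
  | lam M₀ =>
      obtain ⟨n, Δf, τf, βf, msf, prem, hΓ, hty, hm⟩ := lam_inv h M₀ rfl
      have hce : CEq (tensFin n fun i => .arr (τf i) (βf i)) (.tens σ ρ) :=
        peq_ofC_inv hty rfl rfl
      have hleq : LEq (arrs (tensFin n fun i => .arr (τf i) (βf i))) (arrs σ ++ arrs ρ) :=
        ceq_arrs_leq hce
      set L : List (Ctx × CTy × PTy × ℕ) := List.ofFn (fun i => (Δf i, τf i, βf i, msf i)) with hL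
      have h1 : arrs (tensFin n fun i => .arr (τf i) (βf i))
          = List.ofFn (fun i => CTy.arr (τf i) (βf i)) := by
        refine arrs_of_all_arr _ ?_
        intro x hx
        rw [List.mem_ofFn] at hx
        obtain ⟨i, hi⟩ := hx
        exact ⟨_, _, hi.symm⟩
      have h2 : L.map (fun t => CTy.arr t.2.1 t.2.2.1)
          = List.ofFn (fun i => CTy.arr (τf i) (βf i)) := by
        rw [hL, List.map_ofFn]
        rfl
      have hleq' : LEq (L.map (fun t => CTy.arr t.2.1 t.2.2.1)) (arrs σ ++ arrs ρ) := by
        rw [h2, ← h1]; exact hleq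
      obtain ⟨l', pm, fm⟩ := hleq'
      obtain ⟨L', pL, hl'⟩ := perm_map_inv pm L rfl
      subst hl'
      obtain ⟨m1l, m2l, he, f1, f2⟩ := forall₂_append_split fm
      obtain ⟨L₁, L₂, heL, e1, e2⟩ := map_append_split he
      subst heL
      have hprem : ∀ t ∈ L, Deriv (Ctx.cons t.2.1 t.1) M₀ t.2.2.1 t.2.2.2 := by
        intro t ht
        rw [hL, List.mem_ofFn] at ht
        obtain ⟨j, hj⟩ := ht
        rw [← hj]
        exact prem j
      have hprem' : ∀ t ∈ L₁ ++ L₂, Deriv (Ctx.cons t.2.1 t.1) M₀ t.2.2.1 t.2.2.2 :=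
        fun t ht => hprem t (pL.symm.subset ht)
      have d1 := side_build M₀ σ L₁ (fun t ht => hprem' t (List.mem_append_left _ ht)) (e1 ▸ f1)
      have d2 := side_build M₀ ρ L₂ (fun t ht => hprem' t (List.mem_append_right _ ht)) (e2 ▸ f2)
      refine ⟨_, _, _, _, ?_, d1, d2, ?_⟩
      · -- measure
        have hsum : (L.map (fun t => t.2.2.2)).sum
            = ((L₁ ++ L₂).map (fun t => t.2.2.2)).sum := (pL.map _).sum_eq
        have hmsum : (L.map (fun t => t.2.2.2)).sum = ∑ i, msf i := by
          rw [hL, List.map_ofFn]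
          exact sum_ofFn_eq _
        rw [hm, ← hmsum, hsum, List.map_append, List.sum_append]
      · -- context
        intro x
        refine .trans (hΓ x) ?_
        have hx1 : tensCtxFin n Δf x = tensList (L.map (fun t => t.1 x)) := by
          rw [hL, List.map_ofFn]; rfl
        rw [hx1]
        refine .trans (ceq_tensList_perm (pL.map _)) ?_
        rw [List.map_append]
        exact ceq_tensList_append _ _
/-! ### Part 5c: n-ary splitting -/

theorem deriv_splitFin {V : Tm} (hV : IsValue V) :
    ∀ {n : ℕ} {f : Fin n → CTy} {Γ : Ctx} {m : ℕ}, Deriv Γ V (.ofC (tensFin n f)) m →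
    ∃ (Γs : Fin n → Ctx) (ms : Fin n → ℕ), m = ∑ i, ms i ∧
      (∀ i, Deriv (Γs i) V (.ofC (f i)) (ms i)) ∧ CtxEq Γ (tensCtxFin n Γs) := by
  intro n
  induction n with
  | zero =>
      intro f Γ m h
      obtain ⟨hm, hΓ⟩ := valueZero hV h (by rfl)
      exact ⟨Fin.elim0, Fin.elim0, by simpa using hm, fun i => i.elim0,
        fun x => caEqOne (hΓ x)⟩
  | succ n ih =>
      intro f Γ m h
      rw [tensFin_succ] at h
      obtain ⟨Γ₁, Γ₂, m₁, m₂, hm, d1, d2, hc⟩ := deriv_split hV h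
      obtain ⟨Γs', ms', hm', ds', hc'⟩ := ih d2
      refine ⟨Fin.cases Γ₁ Γs', Fin.cases m₁ ms', ?_, ?_, ?_⟩
      · rw [Fin.sum_univ_succ]
        simp only [Fin.cases_zero, Fin.cases_succ]
        omega
      · intro i
        refine Fin.cases ?_ ?_ i
        · simpa using d1
        · intro j; simpa using ds' j
      · intro x
        refine .trans (hc x) ?_
        have : tensCtxFin (n+1) (Fin.cases Γ₁ Γs') x
            = .tens (Γ₁ x) (tensFin n (fun i => Γs' i x)) := by
          show tensFin (n+1) _ = _
          rw [tensFin_succ]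
          simp
        rw [this]
        exact .tensCongr (.refl _) (hc' x)
/-! ### Part 6: insertAt / removeAt and the shift lemma -/

def insertAt (c : ℕ) (ρ : CTy) (Γ : Ctx) : Ctx := fun n =>
  if n < c then Γ n else if n = c then ρ else Γ (n-1)

def removeAt (k : ℕ) (Γ : Ctx) : Ctx := fun n => if n < k then Γ n else Γ (n+1)

theorem insertAt_cons (c : ℕ) (ρ a : CTy) (Γ : Ctx) :
    insertAt (c+1) ρ (Ctx.cons a Γ) = Ctx.cons a (insertAt c ρ Γ) := by
  funext n
  cases n with
  | zero => simp [insertAt, Ctx.cons]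
  | succ m =>
      show insertAt (c+1) ρ (Ctx.cons a Γ) (m+1) = insertAt c ρ Γ m
      simp only [insertAt]
      rcases lt_trichotomy m c with h|h|h
      · rw [if_pos (by omega), if_pos h]; rfl
      · subst h; rw [if_neg (by omega), if_pos rfl, if_neg (by omega), if_pos rfl]
      · rw [if_neg (by omega), if_neg (by omega), if_neg (by omega), if_neg (by omega)]
        have : m + 1 - 1 = (m - 1) + 1 := by omega
        rw [this]; rfl

theorem removeAt_cons (k : ℕ) (a : CTy) (Γ : Ctx) :
    removeAt (k+1) (Ctx.cons a Γ) = Ctx.cons a (removeAt k Γ) := by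
  funext n
  cases n with
  | zero => simp [removeAt, Ctx.cons]
  | succ m =>
      show removeAt (k+1) (Ctx.cons a Γ) (m+1) = removeAt k Γ m
      simp only [removeAt]
      by_cases h : m < k
      · rw [if_pos (by omega), if_pos h]; rfl
      · rw [if_neg (by omega), if_neg h]; rfl

theorem removeAt_zero_cons (a : CTy) (Γ : Ctx) : removeAt 0 (Ctx.cons a Γ) = Γ := by
  funext n; simp [removeAt, Ctx.cons]

theorem insertAt_zero (ρ : CTy) (Γ : Ctx) : insertAt 0 ρ Γ = Ctx.cons ρ Γ := by
  funext n
  cases n with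
  | zero => simp [insertAt, Ctx.cons]
  | succ m => simp [insertAt, Ctx.cons]

theorem isValue_shift {V : Tm} (hV : IsValue V) (c : ℕ) : IsValue (shiftTm c V) := by
  cases V with
  | var n => by_cases h : n < c <;> simp [shiftTm, h, IsValue]
  | lam M => simp [shiftTm, IsValue]
  | app M N => simp [IsValue] at hV
  | plus M N => simp [IsValue] at hV
  | par M N => simp [IsValue] at hV

theorem shift_deriv {Γ : Ctx} {M : Tm} {α : PTy} {m : ℕ} (h : Deriv Γ M α m) :
    ∀ c, Deriv (insertAt c .one Γ) (shiftTm c M) α m := by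
  induction h with
  | ax x τ =>
      intro c
      by_cases hx : x < c
      · have hs : shiftTm c (.var x) = .var x := by simp [shiftTm, hx]
        have hc : insertAt c .one (Ctx.single x τ) = Ctx.single x τ := by
          funext n
          simp only [insertAt, Ctx.single]
          split_ifs <;> first | rfl | omega
        rw [hs, hc]; exact .ax x τ
      · have hs : shiftTm c (.var x) = .var (x+1) := by simp [shiftTm, hx]
        have hc : insertAt c .one (Ctx.single x τ) = Ctx.single (x+1) τ := by
          funext n
          simp only [insertAt, Ctx.single]
          split_ifs <;> first | rfl | omega
        rw [hs, hc]; exact .ax (x+1) τ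
  | lamI n Δf τf αf msf M prem ih =>
      intro c
      have prem' : ∀ i, Deriv (Ctx.cons (τf i) (insertAt c .one (Δf i)))
          (shiftTm (c+1) M) (αf i) (msf i) := fun i => by
        have := ih i (c+1)
        rwa [insertAt_cons] at this
      refine (Deriv.lamI n _ τf αf msf _ prem').eqv ?_ (.refl _)
      intro x
      show CEq (tensFin n fun i => insertAt c .one (Δf i) x)
        (insertAt c .one (tensCtxFin n Δf) x)
      rcases lt_trichotomy x c with hx|hx|hx
      · simp only [insertAt, if_pos hx]; exact .refl _
      · subst hx
        simp only [insertAt, lt_irrefl, if_neg (by omega : ¬ x < x), if_pos rfl]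
        exact caEqOne (by simp [cac_tensFin, cac])
      · simp only [insertAt, if_neg (by omega : ¬ x < c), if_neg (by omega : x ≠ c)]
        exact .refl _
  | appE k hk nf hn τf αf Δ Γf m0 msf M N hM hNs ihM ihNs =>
      intro c
      refine (Deriv.appE k hk nf hn τf αf _ _ m0 msf _ _ (ihM c) (fun i => ihNs i c)).eqv ?_ (.refl _)
      intro x
      show CEq (.tens (insertAt c .one Δ x) (tensFin k fun i => insertAt c .one (Γf i) x))
        (insertAt c .one (Ctx.tens Δ (tensCtxFin k Γf)) x)
      rcases lt_trichotomy x c with hx|hx|hx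
      · simp only [insertAt, if_pos hx]; exact .refl _
      · subst hx
        simp only [insertAt, if_neg (by omega : ¬ x < x), if_pos rfl]
        exact caEqOne (by simp [cac_tensFin, cac])
      · simp only [insertAt, if_neg (by omega : ¬ x < c), if_neg (by omega : x ≠ c)]
        exact .refl _
  | plusL N h ih => intro c; exact (ih c).plusL _
  | plusR M h ih => intro c; exact (ih c).plusR _
  | parI h1 h2 ih1 ih2 =>
      intro c
      refine ((ih1 c).parI (ih2 c)).eqv ?_ (.refl _)
      intro x
      show CEq (.tens (insertAt c .one _ x) (insertAt c .one _ x)) (insertAt c .one (Ctx.tens _ _) x)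
      rcases lt_trichotomy x c with hx|hx|hx
      · simp only [insertAt, if_pos hx]; exact .refl _
      · subst hx
        simp only [insertAt, if_neg (by omega : ¬ x < x), if_pos rfl]
        exact .unit _
      · simp only [insertAt, if_neg (by omega : ¬ x < c), if_neg (by omega : x ≠ c)]
        exact .refl _
  | eqv h hc hp ih =>
      intro c
      refine (ih c).eqv ?_ hp
      intro x
      simp only [insertAt]
      split_ifs with h1 h2
      · exact hc x
      · exact .refl _
      · exact hc (x-1)
/-! ### Part 7: generalized substitution -/

theorem subst_gen {Θ : Ctx} {M : Tm} {α : PTy} {m₁ : ℕ} (h₁ : Deriv Θ M α m₁) :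
    ∀ (j : ℕ) (Γv : Ctx) (V : Tm) (m₂ : ℕ), IsValue V → Deriv Γv V (.ofC (Θ j)) m₂ →
    Deriv (Ctx.tens (removeAt j Θ) Γv) (substTm M j V) α (m₁ + m₂) := by
  induction h₁ with
  | ax x τ =>
      intro j Γv V m₂ hV hVd
      by_cases hx : x = j
      · subst hx
        have hτ : Ctx.single x τ x = τ := by simp [Ctx.single]
        rw [hτ] at hVd
        have hs : substTm (.var x) x V = V := by simp [substTm]
        rw [hs]
        have hctx : CtxEq Γv (Ctx.tens (removeAt x (Ctx.single x τ)) Γv) := by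
          intro n
          have hone : removeAt x (Ctx.single x τ) n = .one := by
            simp only [removeAt, Ctx.single]
            split_ifs <;> first | rfl | omega
          show CEq (Γv n) (.tens (removeAt x (Ctx.single x τ) n) (Γv n))
          rw [hone]
          exact .symm (ceq_one_tens _)
        rw [show (0 : ℕ) + m₂ = m₂ by omega]
        exact hVd.eqv hctx (.refl _)
      · have hone : Ctx.single x τ j = .one := by
          simp only [Ctx.single]
          rw [if_neg (Ne.symm hx)]
        rw [hone] at hVd
        obtain ⟨hm2, hΓ0⟩ := valueZero hV hVd (by rfl)
        subst hm2
        have hctx : ∀ y, CtxEq (Ctx.single y τ) (Ctx.tens (Ctx.single y τ) Γv) := by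
          intro y n
          exact .symm (.trans (.tensCongr (.refl _) (caEqOne (hΓ0 n))) (.unit _))
        by_cases hlt : j < x
        · have hs : substTm (.var x) j V = .var (x-1) := by simp [substTm, hx, hlt]
          have hrem : removeAt j (Ctx.single x τ) = Ctx.single (x-1) τ := by
            funext n
            simp only [removeAt, Ctx.single]
            split_ifs <;> first | rfl | omega
          rw [hs, hrem]
          exact (Deriv.ax (x-1) τ).eqv (hctx (x-1)) (.refl _)
        · have hs : substTm (.var x) j V = .var x := by simp [substTm, hx, hlt]
          have hrem : removeAt j (Ctx.single x τ) = Ctx.single x τ := by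
            funext n
            simp only [removeAt, Ctx.single]
            split_ifs <;> first | rfl | omega
          rw [hs, hrem]
          exact (Deriv.ax x τ).eqv (hctx x) (.refl _)
  | lamI n Δf τf αf msf M prem ih =>
      intro j Γv V m₂ hV hVd
      obtain ⟨Γs, ms₂, hm₂, dV, hcΓ⟩ := deriv_splitFin hV (f := fun i => Δf i j) hVd
      have prem' : ∀ i, Deriv (Ctx.cons (τf i) (Ctx.tens (removeAt j (Δf i)) (Γs i)))
          (substTm M (j+1) (shiftTm 0 V)) (αf i) (msf i + ms₂ i) := by
        intro i
        have dVs : Deriv (Ctx.cons .one (Γs i)) (shiftTm 0 V) (.ofC (Δf i j)) (ms₂ i) := by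
          have := shift_deriv (dV i) 0
          rwa [insertAt_zero] at this
        have := ih i (j+1) (Ctx.cons .one (Γs i)) (shiftTm 0 V) (ms₂ i)
          (isValue_shift hV 0) dVs
        rw [removeAt_cons] at this
        refine this.eqv ?_ (.refl _)
        intro x
        cases x with
        | zero => exact .unit _
        | succ y => exact .refl _
      have base := Deriv.lamI n _ τf αf (fun i => msf i + ms₂ i) _ prem'
      have hmeq : (∑ i, (msf i + ms₂ i)) = (∑ i, msf i) + m₂ := by
        rw [Finset.sum_add_distrib, hm₂]
      rw [hmeq] at base
      refine base.eqv ?_ (.refl _)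
      intro x
      show CEq (tensFin n fun i => .tens (removeAt j (Δf i) x) (Γs i x))
        (.tens (removeAt j (tensCtxFin n Δf) x) (Γv x))
      refine .trans (ceq_tensFin_unzip _ _) (.tensCongr ?_ (.symm (hcΓ x)))
      by_cases hx : x < j
      · simp only [removeAt, if_pos hx]; exact .refl _
      · simp only [removeAt, if_neg hx]; exact .refl _
  | appE kk hk nf hn τf αf Δ Γf m0 msf M N hM hNs ihM ihNs =>
      intro j Γv V m₂ hV hVd
      obtain ⟨Γ₀, Γr, a, b, hab, d0, dr, hc0⟩ :=
        deriv_split hV (σ := Δ j) (ρ := tensFin kk fun i => Γf i j) hVd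
      obtain ⟨Γs, bs, hbs, ds, hcs⟩ := deriv_splitFin hV dr
      have dM := ihM j Γ₀ V a hV d0
      have dN := fun i => ihNs i j (Γs i) V (bs i) hV (ds i)
      have base := Deriv.appE kk hk nf hn τf αf _ _ (m0 + a) (fun i => msf i + bs i) _ _ dM dN
      have h2 : 2 ≤ ∑ i, 2 * nf i := by
        have hle : 2 * nf ⟨0, hk⟩ ≤ ∑ i, 2 * nf i :=
          Finset.single_le_sum (f := fun i => 2 * nf i) (fun i _ => Nat.zero_le _)
            (Finset.mem_univ _)
        have := hn ⟨0, hk⟩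
        omega
      have hmeq : ((m0 + a) + (∑ i, (msf i + bs i)) + (∑ i, 2 * nf i)) - 1
          = ((m0 + (∑ i, msf i) + (∑ i, 2 * nf i)) - 1) + m₂ := by
        rw [Finset.sum_add_distrib]
        omega
      rw [hmeq] at base
      refine base.eqv ?_ (.refl _)
      intro x
      show CEq (.tens (.tens (removeAt j Δ x) (Γ₀ x))
          (tensFin kk fun i => .tens (removeAt j (Γf i) x) (Γs i x)))
        (.tens (removeAt j (Ctx.tens Δ (tensCtxFin kk Γf)) x) (Γv x))
      refine .trans (.tensCongr (.refl _) (ceq_tensFin_unzip _ _))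
        (.trans (ceq_middle4 _ _ _ _) (.tensCongr ?_ ?_))
      · by_cases hx : x < j
        · simp only [removeAt, if_pos hx]; exact .refl _
        · simp only [removeAt, if_neg hx]; exact .refl _
      · exact .symm (.trans (hc0 x) (.tensCongr (.refl _) (hcs x)))
  | plusL N h ih =>
      intro j Γv V m₂ hV hVd
      have h' := (ih j Γv V m₂ hV hVd).plusL (substTm N j V)
      rwa [Nat.add_right_comm] at h'
  | plusR M h ih =>
      intro j Γv V m₂ hV hVd
      have h' := (ih j Γv V m₂ hV hVd).plusR (substTm M j V)
      rwa [Nat.add_right_comm] at h'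
  | parI h1 h2 ih1 ih2 =>
      intro j Γv V m₂ hV hVd
      rename_i Δ Γc M N β γ m m'
      obtain ⟨Γ₁, Γ₂, a, b, hab, d1, d2, hc⟩ := deriv_split hV (σ := Δ j) (ρ := Γc j) hVd
      have base := (ih1 j Γ₁ V a hV d1).parI (ih2 j Γ₂ V b hV d2)
      rw [show (m + a) + (m' + b) = (m + m') + m₂ by omega] at base
      refine base.eqv ?_ (.refl _)
      intro x
      show CEq (.tens (.tens (removeAt j Δ x) (Γ₁ x)) (.tens (removeAt j Γc x) (Γ₂ x)))
        (.tens (removeAt j (Ctx.tens Δ Γc) x) (Γv x))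
      refine .trans (ceq_middle4 _ _ _ _) (.tensCongr ?_ (.symm (hc x)))
      by_cases hx : x < j
      · simp only [removeAt, if_pos hx]; exact .refl _
      · simp only [removeAt, if_neg hx]; exact .refl _
  | eqv h hc hp ih =>
      intro j Γv V m₂ hV hVd
      have hVd' := hVd.eqv (CtxEq.refl _) (.ofC (.symm (hc j)))
      refine (ih j Γv V m₂ hV hVd').eqv ?_ hp
      intro x
      refine .tensCongr ?_ (.refl _)
      by_cases hx : x < j
      · simp only [removeAt, if_pos hx]; exact hc x
      · simp only [removeAt, if_neg hx]; exact hc (x+1)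
theorem substitution_lemma (Δ Γ : Ctx) (τ : CTy) (M V : Tm) (α : PTy) (m₁ m₂ : ℕ)
    (hV : IsValue V)
    (h₁ : Deriv (Ctx.cons τ Δ) M α m₁) (h₂ : Deriv Γ V (.ofC τ) m₂) :
    Deriv (Ctx.tens Δ Γ) (substTm M 0 V) α (m₁ + m₂) := by
  have := subst_gen h₁ 0 Γ V m₂ hV h₂
  rwa [removeAt_zero_cons] at this
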